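/- In ZF with Turing determinacy, every function f : 𝒟 → ℝ from the Turing degrees to the reals has countable range over some upper cone: there is a degree x such that {f(y) : y ≥ x} is countable. -/

import Mathlib

/-- Relativized partial recursiveness: `f` is partial recursive in the oracle `O`. -/
inductive RecursiveIn' (O : ℕ →. ℕ) : (ℕ →. ℕ) → Prop
  | oracle : RecursiveIn' O O
  | zero : RecursiveIn' O (pure 0)
  | succ : RecursiveIn' O Nat.succ
  | left : RecursiveIn' O ↑fun n : ℕ => n.unpair.1
  | right : RecursiveIn' O ↑fun n : ℕ => n.unpair.2
  | pair {f g} : RecursiveIn' O f → RecursiveIn' O g →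
      RecursiveIn' O fun n => Nat.pair <$> f n <*> g n
  | comp {f g} : RecursiveIn' O f → RecursiveIn' O g →
      RecursiveIn' O fun n => g n >>= f
  | prec {f g} : RecursiveIn' O f → RecursiveIn' O g →
      RecursiveIn' O (Nat.unpaired fun a n =>
        n.rec (f a) fun y IH => do let i ← IH; g (Nat.pair a (Nat.pair y i)))
  | rfind {f} : RecursiveIn' O f →
      RecursiveIn' O fun a => Nat.rfind fun n => (fun m => m = 0) <$> f (Nat.pair a n)

theorem RecursiveIn'.trans' {O O' f : ℕ →. ℕ}
    (hf : RecursiveIn' O f) (hO : RecursiveIn' O' O) : RecursiveIn' O' f := by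
  induction hf with
  | oracle => exact hO
  | zero => exact .zero
  | succ => exact .succ
  | left => exact .left
  | right => exact .right
  | pair _ _ ih₁ ih₂ => exact .pair ih₁ ih₂
  | comp _ _ ih₁ ih₂ => exact .comp ih₁ ih₂
  | prec _ _ ih₁ ih₂ => exact .prec ih₁ ih₂
  | rfind _ ih => exact .rfind ih

/-- Reals are identified with elements of Cantor space `2^ω`. -/
abbrev TReal : Type := ℕ → Bool

/-- The characteristic (total) function of a real, as a partial function on `ℕ`. -/
def charFn (x : TReal) : ℕ →. ℕ := fun n => Part.some (cond (x n) 1 0)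

/-- Turing reducibility `x ≤ᵀ y` between reals. -/
def TuringLE (x y : TReal) : Prop := RecursiveIn' (charFn y) (charFn x)

theorem TuringLE.refl (x : TReal) : TuringLE x x := RecursiveIn'.oracle

theorem TuringLE.trans {x y z : TReal} (h₁ : TuringLE x y) (h₂ : TuringLE y z) :
    TuringLE x z := RecursiveIn'.trans' h₁ h₂

/-- Turing equivalence of reals. -/
def TuringEquiv (x y : TReal) : Prop := TuringLE x y ∧ TuringLE y x

instance turingSetoid : Setoid TReal :=
  ⟨TuringEquiv, fun x => ⟨TuringLE.refl x, TuringLE.refl x⟩, fun h => ⟨h.2, h.1⟩,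
    fun h₁ h₂ => ⟨h₁.1.trans h₂.1, h₂.2.trans h₁.2⟩⟩

/-- The Turing degrees. -/
def TuringDegree' : Type := Quotient turingSetoid

/-- The Turing degree of a real. -/
def deg (x : TReal) : TuringDegree' := Quotient.mk _ x

instance : PartialOrder TuringDegree' where
  le := Quotient.lift₂ TuringLE (by
    rintro a b a' b' ⟨hab, hba⟩ ⟨hcd, hdc⟩
    exact propext ⟨fun h => (hba.trans h).trans hcd, fun h => (hab.trans h).trans hdc⟩)
  le_refl := fun d => Quotient.inductionOn d TuringLE.refl
  le_trans := fun a b c => Quotient.inductionOn₃ a b c fun _ _ _ h₁ h₂ => TuringLE.trans h₁ h₂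
  le_antisymm := fun a b => Quotient.inductionOn₂ a b fun _ _ h₁ h₂ => Quotient.sound ⟨h₁, h₂⟩

/-- The upper cone of Turing degrees above `x`. -/
def upperCone (x : TuringDegree') : Set TuringDegree' := {y | x ≤ y}

/-- Turing determinacy: every set of Turing degrees contains or is disjoint from
an upper cone. -/
def TD : Prop :=
  ∀ A : Set TuringDegree', (∃ x, upperCone x ⊆ A) ∨ (∃ x, upperCone x ⊆ Aᶜ)

/-- The countable choice axiom for sets of reals. -/
def CCR : Prop :=
  ∀ A : ℕ → Set TReal, (∀ n, (A n).Nonempty) → ∃ f : ℕ → TReal, ∀ n, f n ∈ A n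

theorem RecursiveIn'.of_partrec {O f : ℕ →. ℕ} (hf : Nat.Partrec f) : RecursiveIn' O f := by
  induction hf with
  | zero => exact .zero
  | succ => exact .succ
  | left => exact .left
  | right => exact .right
  | pair _ _ ih₁ ih₂ => exact .pair ih₁ ih₂
  | comp _ _ ih₁ ih₂ => exact .comp ih₁ ih₂
  | prec _ _ ih₁ ih₂ => exact .prec ih₁ ih₂
  | rfind _ ih => exact .rfind ih

/-- The recursive join of countably many reals. -/
def joinReal (g : ℕ → TReal) : TReal := fun k => g k.unpair.1 k.unpair.2

theorem le_joinReal (g : ℕ → TReal) (n : ℕ) : TuringLE (g n) (joinReal g) := by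
  have hc : Nat.Partrec (fun m : ℕ => Part.some (Nat.pair n m) : ℕ →. ℕ) := by
    have : Primrec (fun m : ℕ => Nat.pair n m) :=
      Primrec₂.natPair.comp (Primrec.const n) Primrec.id
    exact Nat.Partrec.of_primrec (Primrec.nat_iff.mp this)
  have h : RecursiveIn' (charFn (joinReal g))
      (fun m => (fun m : ℕ => Part.some (Nat.pair n m) : ℕ →. ℕ) m >>= charFn (joinReal g)) :=
    RecursiveIn'.comp RecursiveIn'.oracle (RecursiveIn'.of_partrec hc)
  have heq : (fun m => (fun m : ℕ => Part.some (Nat.pair n m) : ℕ →. ℕ) m >>=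
      charFn (joinReal g)) = charFn (g n) := by
    funext m
    show (Part.some (Nat.pair n m)).bind (fun k => charFn (joinReal g) k) = charFn (g n) m
    rw [Part.bind_some]
    simp [charFn, joinReal, Nat.unpair_pair]
  rwa [heq] at h

/-- Under TD, every `f : 𝒟 → ℝ` has countable range over some upper cone. -/
theorem range_countable_on_cone (td : TD) (f : TuringDegree' → TReal) :
    ∃ x : TuringDegree', (Set.image f (upperCone x)).Countable := by
  -- For each n, a cone on which (f d) n is constant
  have key : ∀ n : ℕ, ∃ c : TuringDegree', ∃ b : Bool,
      ∀ d ∈ upperCone c, f d n = b := by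
    intro n
    rcases td {d | f d n = true} with ⟨c, hc⟩ | ⟨c, hc⟩
    · exact ⟨c, true, fun d hd => hc hd⟩
    · exact ⟨c, false, fun d hd => by
        have := hc hd
        simp only [Set.mem_compl_iff, Set.mem_setOf_eq, Bool.not_eq_true] at this
        exact this⟩
  choose c b hb using key
  set x : TuringDegree' := deg (joinReal (fun n => (c n).out)) with hx
  refine ⟨x, ?_⟩
  have hconst : ∀ d ∈ upperCone x, f d = b := by
    intro d hd
    funext n
    apply hb n
    have h1 : c n ≤ x := by
      have : deg ((c n).out) ≤ x := le_joinReal (fun n => (c n).out) n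
      rwa [show deg ((c n).out) = c n from Quotient.out_eq (c n)] at this
    exact le_trans h1 hd
  have hsub : Set.image f (upperCone x) ⊆ {b} := by
    rintro _ ⟨d, hd, rfl⟩
    exact hconst d hd
  exact Set.Countable.mono hsub (Set.countable_singleton b)
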